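/- Let I = (a,b) be a bounded interval, γ, δ ∈ ℝ with δ ≥ u_s(t) ≥ 0 on I, and p = 1. Then for any α > 1, A(I; δ, γ) − A(I; u_s, γ) ≤ (α/2) ∫_I |γ| (δ − u_s(t)) dt + |γ| δ |I| / (2α), where A(I; δ, γ) = |γ| δ |I| / 2 is the constant-weight value. -/

import Mathlib

open MeasureTheory ENNReal

/-- The best rank-one approximation functional `A(Γ, u, v)` of the Hardy operator
`T f(x) = v(x) ∫_a^x u f dt` on the set `S ⊆ ℝ` with base point `a`:
`A = sup_{f ∈ L^p(S), ‖f‖_p ≤ 1} inf_{α ∈ ℝ} ‖v·(∫_a^· u f − α)‖_{p,S}`. -/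
lemma Real.ennnorm_eq_ofReal_abs (r : ℝ) : (‖r‖₊ : ℝ≥0∞) = ENNReal.ofReal |r| :=
  Real.enorm_eq_ofReal_abs r

noncomputable def hardyA (p : ℝ≥0∞) (a : ℝ) (S : Set ℝ) (u v : ℝ → ℝ) : ℝ≥0∞ :=
  ⨆ (f : ℝ → ℝ) (_ : MeasureTheory.MemLp f p (MeasureTheory.volume.restrict S) ∧
      MeasureTheory.eLpNorm f p (MeasureTheory.volume.restrict S) ≤ 1),
    ⨅ α : ℝ, MeasureTheory.eLpNorm
      (fun x => v x * ((∫ t in Set.Ioc a x ∩ S, u t * f t) - α)) p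
      (MeasureTheory.volume.restrict S)

lemma hardyA_const_upper (a b : ℝ) (hab : a < b) (γ δ : ℝ) (hδ : 0 ≤ δ) :
    hardyA 1 a (Set.Ioo a b) (fun _ => δ) (fun _ => γ)
      ≤ ENNReal.ofReal (|γ| * δ * ((b - a) / 2)) := by
  set I := Set.Ioo a b with hI
  set m := (a + b) / 2 with hmdef
  have ham : a ≤ m := by rw [hmdef]; linarith
  have hmb : m ≤ b := by rw [hmdef]; linarith
  have hmb' : m < b := by rw [hmdef]; linarith
  have ham' : a < m := by rw [hmdef]; linarith
  have hImeas : MeasurableSet I := measurableSet_Ioo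
  rw [hardyA]
  refine iSup₂_le fun f hf => ?_
  obtain ⟨hmem, hnorm⟩ := hf
  have hfi : Integrable f (volume.restrict I) := memLp_one_iff_integrable.mp hmem
  have hfi' : IntegrableOn (fun t => δ * f t) I volume := hfi.const_mul δ
  refine iInf_le_of_le (∫ t in Set.Ioc a m ∩ I, δ * f t) ?_
  rw [eLpNorm_one_eq_lintegral_enorm]
  have hGae : AEMeasurable (fun t => (‖f t‖₊ : ℝ≥0∞)) (volume.restrict I) :=
    hmem.aestronglyMeasurable.enorm
  set G : ℝ → ℝ≥0∞ := hGae.mk _ with hGdef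
  have hGmeas : Measurable G := hGae.measurable_mk
  have hGeq : (fun t => (‖f t‖₊ : ℝ≥0∞)) =ᵐ[volume.restrict I] G := hGae.ae_eq_mk
  set K : ℝ → Set ℝ := fun x => Set.Ioc (min m x) (max m x) ∩ I with hK
  have hKmeas : ∀ x, MeasurableSet (K x) := fun x => measurableSet_Ioc.inter hImeas
  have hKsub : ∀ x, K x ⊆ I := fun x => Set.inter_subset_right
  -- pointwise bound
  have key : ∀ x : ℝ,
      (‖γ * ((∫ t in Set.Ioc a x ∩ I, δ * f t) - ∫ t in Set.Ioc a m ∩ I, δ * f t)‖₊ : ℝ≥0∞)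
      ≤ (ENNReal.ofReal |γ| * ENNReal.ofReal δ) * ∫⁻ t in K x, (‖f t‖₊ : ℝ≥0∞) := by
    intro x
    rw [Real.ennnorm_eq_ofReal_abs, abs_mul, ENNReal.ofReal_mul (abs_nonneg γ), mul_assoc]
    refine mul_le_mul_right ?_ _
    have main : ∀ s : Set ℝ,
        ENNReal.ofReal |∫ t in s ∩ I, δ * f t|
          ≤ ENNReal.ofReal δ * ∫⁻ t in s ∩ I, (‖f t‖₊ : ℝ≥0∞) := by
      intro s
      calc ENNReal.ofReal |∫ t in s ∩ I, δ * f t|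
          = (‖∫ t in s ∩ I, δ * f t‖₊ : ℝ≥0∞) := (Real.ennnorm_eq_ofReal_abs _).symm
        _ ≤ ∫⁻ t in s ∩ I, (‖δ * f t‖₊ : ℝ≥0∞) := enorm_integral_le_lintegral_enorm _
        _ = ∫⁻ t in s ∩ I, ENNReal.ofReal δ * (‖f t‖₊ : ℝ≥0∞) := by
            refine lintegral_congr fun t => ?_
            rw [Real.ennnorm_eq_ofReal_abs, Real.ennnorm_eq_ofReal_abs, abs_mul,
              ENNReal.ofReal_mul (abs_nonneg δ), abs_of_nonneg hδ]
        _ = ENNReal.ofReal δ * ∫⁻ t in s ∩ I, (‖f t‖₊ : ℝ≥0∞) :=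
            lintegral_const_mul' _ _ ofReal_ne_top
    rcases le_total m x with hmx | hxm
    · have hdec : Set.Ioc a x ∩ I = (Set.Ioc a m ∩ I) ∪ (Set.Ioc m x ∩ I) := by
        rw [← Set.union_inter_distrib_right, Set.Ioc_union_Ioc_eq_Ioc ham hmx]
      have hdisj : Disjoint (Set.Ioc a m ∩ I) (Set.Ioc m x ∩ I) :=
        (Set.Ioc_disjoint_Ioc_of_le le_rfl).mono Set.inter_subset_left Set.inter_subset_left
      rw [hdec, setIntegral_union hdisj (measurableSet_Ioc.inter hImeas)
        (hfi'.mono_set Set.inter_subset_right) (hfi'.mono_set Set.inter_subset_right),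
        add_sub_cancel_left]
      have hKx : K x = Set.Ioc m x ∩ I := by
        simp only [hK, min_eq_left hmx, max_eq_right hmx]
      rw [hKx]
      exact main _
    · rcases le_or_gt a x with hax | hax
      · have hdec : Set.Ioc a m ∩ I = (Set.Ioc a x ∩ I) ∪ (Set.Ioc x m ∩ I) := by
          rw [← Set.union_inter_distrib_right, Set.Ioc_union_Ioc_eq_Ioc hax hxm]
        have hdisj : Disjoint (Set.Ioc a x ∩ I) (Set.Ioc x m ∩ I) :=
          (Set.Ioc_disjoint_Ioc_of_le le_rfl).mono Set.inter_subset_left Set.inter_subset_left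
        rw [hdec, setIntegral_union hdisj (measurableSet_Ioc.inter hImeas)
          (hfi'.mono_set Set.inter_subset_right) (hfi'.mono_set Set.inter_subset_right),
          sub_add_cancel_left, abs_neg]
        have hKx : K x = Set.Ioc x m ∩ I := by
          simp only [hK, min_eq_right hxm, max_eq_left hxm]
        rw [hKx]
        exact main _
      · have hFx : (∫ t in Set.Ioc a x ∩ I, δ * f t) = 0 := by
          rw [Set.Ioc_eq_empty (by linarith : ¬ a < x), Set.empty_inter]
          exact setIntegral_empty
        rw [hFx, zero_sub, abs_neg]
        refine le_trans (main (Set.Ioc a m)) (mul_le_mul_right (lintegral_mono_set ?_) _)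
        rintro t ⟨ht1, ht2⟩
        exact ⟨⟨lt_of_le_of_lt (min_le_right m x) (lt_trans hax ht1.1),
          le_trans ht1.2 (le_max_left m x)⟩, ht2⟩
  -- product measurability for Tonelli
  set h : ℝ → ℝ → ℝ≥0∞ := fun x t =>
    if (min m x < t ∧ t ≤ max m x) ∧ (a < t ∧ t < b) then G t else 0 with hh
  have hhmeas : Measurable (Function.uncurry h) := by
    have hset : MeasurableSet {p : ℝ × ℝ |
        (min m p.1 < p.2 ∧ p.2 ≤ max m p.1) ∧ (a < p.2 ∧ p.2 < b)} := by
      refine MeasurableSet.inter (MeasurableSet.inter ?_ ?_) (MeasurableSet.inter ?_ ?_)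
      · exact measurableSet_lt (measurable_const.min measurable_fst) measurable_snd
      · exact measurableSet_le measurable_snd (measurable_const.max measurable_fst)
      · exact measurableSet_lt measurable_const measurable_snd
      · exact measurableSet_lt measurable_snd measurable_const
    exact Measurable.ite hset (hGmeas.comp measurable_snd) measurable_const
  have hind : ∀ x t, (K x).indicator G t = h x t := by
    intro x t
    simp only [hK, hh, Set.indicator, Set.mem_inter_iff, Set.mem_Ioc, hI, Set.mem_Ioo]
  -- inner bound after swap
  have inner_bound : ∀ t, (∫⁻ x in I, h x t) ≤ I.indicator G t * ENNReal.ofReal ((b - a) / 2) := by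
    intro t
    by_cases htI : a < t ∧ t < b
    · have htI' : t ∈ I := by rw [hI, Set.mem_Ioo]; exact htI
      rw [Set.indicator_of_mem htI']
      rcases le_or_gt t m with h1 | h2
      · have hb : ∀ x : ℝ, h x t ≤ (Set.Iio t).indicator (fun _ => G t) x := by
          intro x
          simp only [hh]
          split
          · rename_i hcond
            have hxt : x < t := by
              by_contra h'
              push_neg at h'
              exact absurd hcond.1.1 (not_lt.mpr (le_min h1 h'))
            rw [Set.indicator_of_mem (Set.mem_Iio.mpr hxt)]
          · exact zero_le
        calc (∫⁻ x in I, h x t) ≤ ∫⁻ x in I, (Set.Iio t).indicator (fun _ => G t) x :=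
              lintegral_mono hb
          _ = G t * (volume.restrict I) (Set.Iio t) := by
              rw [lintegral_indicator measurableSet_Iio, setLIntegral_const]
          _ ≤ G t * ENNReal.ofReal ((b - a) / 2) := by
              refine mul_le_mul_right ?_ _
              rw [Measure.restrict_apply measurableSet_Iio]
              refine le_trans (measure_mono (show Set.Iio t ∩ I ⊆ Set.Ioo a t by
                rintro y ⟨hy1, hy2⟩
                rw [Set.mem_Iio] at hy1
                rw [hI, Set.mem_Ioo] at hy2
                exact ⟨hy2.1, hy1⟩)) ?_
              rw [Real.volume_Ioo]
              refine ENNReal.ofReal_le_ofReal ?_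
              rw [hmdef] at h1
              linarith
      · have hb : ∀ x : ℝ, h x t ≤ (Set.Ici t).indicator (fun _ => G t) x := by
          intro x
          simp only [hh]
          split
          · rename_i hcond
            have hxt : t ≤ x := by
              by_contra h'
              push_neg at h'
              exact absurd hcond.1.2 (not_le.mpr (max_lt h2 h'))
            rw [Set.indicator_of_mem (Set.mem_Ici.mpr hxt)]
          · exact zero_le
        calc (∫⁻ x in I, h x t) ≤ ∫⁻ x in I, (Set.Ici t).indicator (fun _ => G t) x :=
              lintegral_mono hb
          _ = G t * (volume.restrict I) (Set.Ici t) := by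
              rw [lintegral_indicator measurableSet_Ici, setLIntegral_const]
          _ ≤ G t * ENNReal.ofReal ((b - a) / 2) := by
              refine mul_le_mul_right ?_ _
              rw [Measure.restrict_apply measurableSet_Ici]
              refine le_trans (measure_mono (show Set.Ici t ∩ I ⊆ Set.Ico t b by
                rintro y ⟨hy1, hy2⟩
                rw [Set.mem_Ici] at hy1
                rw [hI, Set.mem_Ioo] at hy2
                exact ⟨hy1, hy2.2⟩)) ?_
              rw [Real.volume_Ico]
              refine ENNReal.ofReal_le_ofReal ?_
              rw [hmdef] at h2
              linarith
    · have : ∀ x, h x t = 0 := by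
        intro x
        simp only [hh]
        split
        · rename_i hcond; exact absurd hcond.2 htI
        · rfl
      rw [lintegral_congr this, lintegral_zero]
      exact zero_le
  -- put everything together
  calc (∫⁻ x, (‖γ * ((∫ t in Set.Ioc a x ∩ I, δ * f t) - ∫ t in Set.Ioc a m ∩ I, δ * f t)‖₊ : ℝ≥0∞)
          ∂(volume.restrict I))
      ≤ ∫⁻ x in I, (ENNReal.ofReal |γ| * ENNReal.ofReal δ) * ∫⁻ t in K x, (‖f t‖₊ : ℝ≥0∞) :=
        lintegral_mono key
    _ = (ENNReal.ofReal |γ| * ENNReal.ofReal δ)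
        * ∫⁻ x in I, ∫⁻ t in K x, (‖f t‖₊ : ℝ≥0∞) :=
        lintegral_const_mul' _ _ (ENNReal.mul_ne_top ofReal_ne_top ofReal_ne_top)
    _ = (ENNReal.ofReal |γ| * ENNReal.ofReal δ) * ∫⁻ x in I, ∫⁻ t, h x t := by
        refine congrArg _ (lintegral_congr fun x => ?_)
        have e1 : (∫⁻ t in K x, (‖f t‖₊ : ℝ≥0∞)) = ∫⁻ t in K x, G t :=
          lintegral_congr_ae (hGeq.filter_mono (ae_mono (Measure.restrict_mono (hKsub x) le_rfl)))
        rw [e1, ← lintegral_indicator (hKmeas x)]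
        exact lintegral_congr fun t => hind x t
    _ = (ENNReal.ofReal |γ| * ENNReal.ofReal δ) * ∫⁻ t, ∫⁻ x in I, h x t := by
        rw [lintegral_lintegral_swap hhmeas.aemeasurable]
    _ ≤ (ENNReal.ofReal |γ| * ENNReal.ofReal δ)
        * ∫⁻ t, I.indicator G t * ENNReal.ofReal ((b - a) / 2) :=
        mul_le_mul_right (lintegral_mono inner_bound) _
    _ = (ENNReal.ofReal |γ| * ENNReal.ofReal δ)
        * ((∫⁻ t, I.indicator G t) * ENNReal.ofReal ((b - a) / 2)) := by
        rw [lintegral_mul_const' _ _ ofReal_ne_top]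
    _ ≤ (ENNReal.ofReal |γ| * ENNReal.ofReal δ) * (1 * ENNReal.ofReal ((b - a) / 2)) := by
        refine mul_le_mul_right (mul_le_mul_left ?_ _) _
        rw [lintegral_indicator hImeas]
        calc (∫⁻ t in I, G t) = ∫⁻ t in I, (‖f t‖₊ : ℝ≥0∞) := lintegral_congr_ae hGeq.symm
          _ = eLpNorm f 1 (volume.restrict I) := (eLpNorm_one_eq_lintegral_enorm (f := f) (μ := volume.restrict I)).symm
          _ ≤ 1 := hnorm
    _ = ENNReal.ofReal (|γ| * δ * ((b - a) / 2)) := by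
        rw [one_mul, ← ENNReal.ofReal_mul (abs_nonneg γ), ← ENNReal.ofReal_mul
          (mul_nonneg (abs_nonneg γ) hδ)]

lemma hardyA_lower (a b r : ℝ) (hab : a < b) (γ : ℝ) (us : ℝ → ℝ)
    (hint : IntegrableOn us (Set.Ioo a b)) (hr : 0 < r) (hr2 : r < (b - a) / 2) :
    ENNReal.ofReal (|γ| * (((b - a) / 2 - r) *
        ((2 * r)⁻¹ * ∫ t in Set.Ioo ((a + b) / 2 - r) ((a + b) / 2 + r), us t)))
      ≤ hardyA 1 a (Set.Ioo a b) us (fun _ => γ) := by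
  have hm : ((a + b) / 2 : ℝ) = (a + b) / 2 := rfl
  set I := Set.Ioo a b with hI
  set m := (a + b) / 2 with hmdef
  set J := Set.Ioo (m - r) (m + r) with hJ
  have hma : m - r > a := by rw [hmdef]; linarith
  have hmb : m + r < b := by rw [hmdef]; linarith
  have hJI : J ⊆ I := by
    intro t ht
    rw [hJ, Set.mem_Ioo] at ht
    rw [hI, Set.mem_Ioo]
    exact ⟨by linarith [ht.1], by linarith [ht.2]⟩
  set f : ℝ → ℝ := J.indicator (fun _ => (2 * r)⁻¹) with hf
  have hJmeas : MeasurableSet J := measurableSet_Ioo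
  have hvolJ : (volume.restrict I) J = ENNReal.ofReal (2 * r) := by
    rw [Measure.restrict_apply hJmeas, Set.inter_eq_self_of_subset_left hJI]
    rw [hJ, Real.volume_Ioo]
    ring_nf
  have hmem : MemLp f 1 (volume.restrict I) := by
    refine memLp_indicator_const 1 hJmeas _ (Or.inr ?_)
    rw [hvolJ]; exact ofReal_ne_top
  have hnorm : eLpNorm f 1 (volume.restrict I) ≤ 1 := by
    rw [hf, eLpNorm_indicator_const hJmeas one_ne_zero one_ne_top, hvolJ]
    rw [Real.enorm_eq_ofReal_abs, abs_of_nonneg (by positivity : (0:ℝ) ≤ (2*r)⁻¹)]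
    norm_num
    have he : r⁻¹ * (1 / 2) * (2 * r) = 1 := by field_simp
    have h2r : (2:ℝ≥0∞) * ENNReal.ofReal r = ENNReal.ofReal (2 * r) := by
      rw [ENNReal.ofReal_mul (by norm_num)]; norm_num
    rw [h2r, ← ENNReal.ofReal_mul (by positivity), he, ENNReal.ofReal_one]
  set SJ := ∫ t in J, us t with hSJ
  set H : ℝ := (2 * r)⁻¹ * SJ with hH
  rw [hardyA]
  refine le_iSup₂_of_le f ⟨hmem, hnorm⟩ (le_iInf fun c => ?_)
  rw [eLpNorm_one_eq_lintegral_enorm]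
  have hF1 : ∀ x ∈ Set.Ioo a (m - r), (∫ t in Set.Ioc a x ∩ I, us t * f t) = 0 := by
    intro x hx
    rw [Set.mem_Ioo] at hx
    apply setIntegral_eq_zero_of_forall_eq_zero
    intro t ht
    rcases ht with ⟨ht1, _⟩
    rw [Set.mem_Ioc] at ht1
    have : t ∉ J := by rw [hJ, Set.mem_Ioo]; push_neg; intro h1; linarith [hx.2, ht1.2]
    rw [hf, Set.indicator_of_notMem this, mul_zero]
  have hF2 : ∀ x ∈ Set.Ioo (m + r) b, (∫ t in Set.Ioc a x ∩ I, us t * f t) = H := by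
    intro x hx
    rw [Set.mem_Ioo] at hx
    have step1 : (∫ t in Set.Ioc a x ∩ I, us t * f t)
        = ∫ t in Set.Ioc a x ∩ I, J.indicator (fun t => us t * (2*r)⁻¹) t := by
      refine setIntegral_congr_fun (measurableSet_Ioc.inter measurableSet_Ioo) (fun t _ => ?_)
      rw [hf]
      simp only [Set.indicator]
      split <;> simp
    rw [step1, setIntegral_indicator hJmeas]
    have hsub : (Set.Ioc a x ∩ I) ∩ J = J := by
      apply Set.inter_eq_self_of_subset_right
      intro t ht
      have htI := hJI ht
      rw [hJ, Set.mem_Ioo] at ht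
      rw [hI, Set.mem_Ioo] at htI
      exact ⟨⟨htI.1, by linarith [ht.2, hx.1]⟩, by rw [hI, Set.mem_Ioo]; exact htI⟩
    rw [hsub, integral_mul_const]
    exact mul_comm _ _
  have hg1 : (∫⁻ x in Set.Ioo a (m - r),
        (‖γ * ((∫ t in Set.Ioc a x ∩ I, us t * f t) - c)‖₊ : ℝ≥0∞))
      = ENNReal.ofReal (|γ| * |c|) * ENNReal.ofReal ((b - a)/2 - r) := by
    rw [setLIntegral_congr_fun measurableSet_Ioo
      ((fun x hx =>
        show (‖γ * ((∫ t in Set.Ioc a x ∩ I, us t * f t) - c)‖₊ : ℝ≥0∞)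
          = ENNReal.ofReal (|γ| * |c|) by
        rw [hF1 x hx, zero_sub, Real.ennnorm_eq_ofReal_abs, abs_mul, abs_neg]))]
    rw [setLIntegral_const, Real.volume_Ioo]
    congr 1
    rw [hmdef]; ring
  have hg2 : (∫⁻ x in Set.Ioo (m + r) b,
        (‖γ * ((∫ t in Set.Ioc a x ∩ I, us t * f t) - c)‖₊ : ℝ≥0∞))
      = ENNReal.ofReal (|γ| * |H - c|) * ENNReal.ofReal ((b - a)/2 - r) := by
    rw [setLIntegral_congr_fun measurableSet_Ioo
      ((fun x hx =>
        show (‖γ * ((∫ t in Set.Ioc a x ∩ I, us t * f t) - c)‖₊ : ℝ≥0∞)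
          = ENNReal.ofReal (|γ| * |H - c|) by
        rw [hF2 x hx, Real.ennnorm_eq_ofReal_abs, abs_mul]))]
    rw [setLIntegral_const, Real.volume_Ioo]
    congr 1
    rw [hmdef]; ring
  have hsplit : (∫⁻ x in Set.Ioo a (m - r),
        (‖γ * ((∫ t in Set.Ioc a x ∩ I, us t * f t) - c)‖₊ : ℝ≥0∞))
      + (∫⁻ x in Set.Ioo (m + r) b,
        (‖γ * ((∫ t in Set.Ioc a x ∩ I, us t * f t) - c)‖₊ : ℝ≥0∞))
      ≤ ∫⁻ x in I, (‖γ * ((∫ t in Set.Ioc a x ∩ I, us t * f t) - c)‖₊ : ℝ≥0∞) := by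
    rw [← lintegral_union measurableSet_Ioo (by
      rw [Set.disjoint_left]; intro x hx1 hx2
      rw [Set.mem_Ioo] at hx1 hx2; linarith [hx1.2, hx2.1])]
    refine lintegral_mono_set (fun x hx => ?_)
    rcases hx with hx | hx <;> rw [Set.mem_Ioo] at hx <;> rw [hI, Set.mem_Ioo]
    · exact ⟨hx.1, by linarith [hx.2]⟩
    · exact ⟨by linarith [hx.1], hx.2⟩
  refine le_trans ?_ hsplit
  rw [hg1, hg2, ← add_mul, ← ENNReal.ofReal_add (by positivity) (by positivity),
    ← ENNReal.ofReal_mul (by positivity)]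
  apply ENNReal.ofReal_le_ofReal
  have h1 : |c| + |H - c| ≥ |H| := by
    calc |c| + |H - c| ≥ |c + (H - c)| := abs_add_le _ _
    _ = |H| := by ring_nf
  have h2 : ((b-a)/2 - r) ≥ 0 := by linarith
  have h3 : H ≤ |c| + |H - c| := le_trans (le_abs_self H) h1
  nlinarith [mul_nonneg (mul_nonneg (abs_nonneg γ) h2) (sub_nonneg.mpr h3)]

set_option maxHeartbeats 1000000 in
/-- (Case `p = 1`.) For `0 ≤ u_s ≤ δ` on a bounded interval `I = (a,b)` and
any `α > 1`,
`A(I; δ, γ) − A(I; u_s, γ) ≤ (α/2) ∫_I |γ|(δ − u_s) dt + |γ| δ |I| / (2α)`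
(stated additively since values lie in `ℝ≥0∞`). -/
theorem stmt_9 (a b : ℝ) (hab : a < b) (γ δ α : ℝ) (hα : 1 < α)
    (us : ℝ → ℝ) (h : ∀ t ∈ Set.Ioo a b, 0 ≤ us t ∧ us t ≤ δ)
    (hint : IntegrableOn us (Set.Ioo a b)) :
    hardyA 1 a (Set.Ioo a b) (fun _ => δ) (fun _ => γ)
      ≤ hardyA 1 a (Set.Ioo a b) us (fun _ => γ)
        + ENNReal.ofReal (α / 2 * ∫ t in Set.Ioo a b, |γ| * (δ - us t))
        + ENNReal.ofReal (|γ| * δ * (b - a) / (2 * α)) := by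
  have hα0 : (0:ℝ) < α := by linarith
  have hδ : 0 ≤ δ := by
    have hm : (a + b) / 2 ∈ Set.Ioo a b := by
      rw [Set.mem_Ioo]; constructor <;> linarith
    exact le_trans (h _ hm).1 (h _ hm).2
  have hIint : IntegrableOn (fun _ : ℝ => δ) (Set.Ioo a b) := integrableOn_const
    (by rw [Real.volume_Ioo]; exact ofReal_ne_top)
  obtain ⟨D, hD⟩ : ∃ D : ℝ, D = ∫ t in Set.Ioo a b, (δ - us t) := ⟨_, rfl⟩
  have hDval : D = δ * (b - a) - ∫ t in Set.Ioo a b, us t := by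
    rw [hD, integral_sub hIint hint, setIntegral_const, Real.volume_real_Ioo_of_le hab.le, smul_eq_mul]
    ring
  have hD0 : 0 ≤ D := by
    rw [hD]
    refine setIntegral_nonneg measurableSet_Ioo fun t ht => ?_
    linarith [(h t ht).2]
  have habs : ∫ t in Set.Ioo a b, |γ| * (δ - us t) = |γ| * D := by
    rw [hD, integral_const_mul]
  have hU := hardyA_const_upper a b hab γ δ hδ
  refine le_trans hU ?_
  rw [habs]
  by_cases hc : (α - 1) * (δ * (b - a)) ≤ α * D
  · -- trivial case: no need for the lower bound
    have hreal : |γ| * δ * ((b - a) / 2)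
        ≤ α / 2 * (|γ| * D) + |γ| * δ * (b - a) / (2 * α) := by
      have key : δ * ((b - a) / 2) ≤ α / 2 * D + δ * (b - a) / (2 * α) := by
        have h1 : (α - 1) * (δ * (b - a)) / 2 ≤ α / 2 * D := by
          have e : α / 2 * D = (α * D) / 2 := by ring
          rw [e]; linarith
        have h2 : (α - 1) * (δ * (b - a)) / 2 + δ * (b - a) / (2 * α) - δ * ((b - a) / 2)
            = (δ * (b - a)) * ((α - 1) ^ 2) / (2 * α) := by
          field_simp
          ring
        have h3 : (0:ℝ) ≤ (δ * (b - a)) * ((α - 1) ^ 2) / (2 * α) := by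
          have : (0:ℝ) ≤ δ * (b - a) := by nlinarith
          positivity
        linarith
      calc |γ| * δ * ((b - a) / 2) = |γ| * (δ * ((b - a) / 2)) := by ring
        _ ≤ |γ| * (α / 2 * D + δ * (b - a) / (2 * α)) :=
            mul_le_mul_of_nonneg_left key (abs_nonneg γ)
        _ = α / 2 * (|γ| * D) + |γ| * δ * (b - a) / (2 * α) := by ring
    calc ENNReal.ofReal (|γ| * δ * ((b - a) / 2))
        ≤ ENNReal.ofReal (α / 2 * (|γ| * D) + |γ| * δ * (b - a) / (2 * α)) :=
          ENNReal.ofReal_le_ofReal hreal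
      _ = ENNReal.ofReal (α / 2 * (|γ| * D)) + ENNReal.ofReal (|γ| * δ * (b - a) / (2 * α)) :=
          ENNReal.ofReal_add (mul_nonneg (by positivity) (mul_nonneg (abs_nonneg γ) hD0))
            (div_nonneg (mul_nonneg (mul_nonneg (abs_nonneg γ) hδ) (by linarith))
              (by positivity))
      _ ≤ hardyA 1 a (Set.Ioo a b) us (fun _ => γ) + ENNReal.ofReal (α / 2 * (|γ| * D))
          + ENNReal.ofReal (|γ| * δ * (b - a) / (2 * α)) := by
          rw [add_assoc]
          exact le_add_self
  · push_neg at hc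
    have hδ0 : 0 < δ := by
      rcases lt_or_eq_of_le hδ with h' | h'
      · exact h'
      · exfalso
        have hSnn : 0 ≤ ∫ t in Set.Ioo a b, us t :=
          setIntegral_nonneg measurableSet_Ioo fun t ht => (h t ht).1
        have hD' : D = 0 := by nlinarith [hDval]
        rw [hD', ← h'] at hc
        simp at hc
    obtain ⟨r, hr⟩ : ∃ r : ℝ, r = (D / δ + (b - a) / α) / 2 := ⟨_, rfl⟩
    have hrpos : 0 < r := by
      have h1 : 0 ≤ D / δ := div_nonneg hD0 hδ0.le
      have h2 : 0 < (b - a) / α := div_pos (by linarith) hα0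
      rw [hr]; linarith
    have hr2 : r < (b - a) / 2 := by
      have e : D / δ + (b - a) / α < b - a := by
        rw [div_add_div _ _ (ne_of_gt hδ0) (ne_of_gt hα0), div_lt_iff₀ (by positivity)]
        nlinarith
      rw [hr]
      linarith
    have hLo := hardyA_lower a b r hab γ us hint hrpos hr2
    have hJI : Set.Ioo ((a + b) / 2 - r) ((a + b) / 2 + r) ⊆ Set.Ioo a b := by
      intro t ht
      rw [Set.mem_Ioo] at ht ⊢
      constructor <;> [nlinarith [ht.1]; nlinarith [ht.2]]
    -- ∫_J us ≥ δ (b-a) / α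
    have hSJ : δ * (b - a) / α ≤ ∫ t in Set.Ioo ((a + b) / 2 - r) ((a + b) / 2 + r), us t := by
      have hsplit : (∫ t in Set.Ioo a b, us t)
          = (∫ t in Set.Ioo ((a + b) / 2 - r) ((a + b) / 2 + r), us t)
            + ∫ t in Set.Ioo a b \ Set.Ioo ((a + b) / 2 - r) ((a + b) / 2 + r), us t := by
        rw [← setIntegral_union Set.disjoint_sdiff_right (measurableSet_Ioo.diff measurableSet_Ioo)
          (hint.mono_set hJI) (hint.mono_set Set.diff_subset), Set.union_diff_cancel hJI]
      have hvol : volume (Set.Ioo a b \ Set.Ioo ((a + b) / 2 - r) ((a + b) / 2 + r))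
          = ENNReal.ofReal ((b - a) - 2 * r) := by
        rw [measure_diff hJI measurableSet_Ioo.nullMeasurableSet
          (by rw [Real.volume_Ioo]; exact ofReal_ne_top)]
        rw [Real.volume_Ioo, Real.volume_Ioo,
          ← ENNReal.ofReal_sub _ (by linarith)]
        congr 1; ring
      have hbound : (∫ t in Set.Ioo a b \ Set.Ioo ((a + b) / 2 - r) ((a + b) / 2 + r), us t)
          ≤ δ * ((b - a) - 2 * r) := by
        calc (∫ t in Set.Ioo a b \ Set.Ioo ((a + b) / 2 - r) ((a + b) / 2 + r), us t)
            ≤ ∫ _t in Set.Ioo a b \ Set.Ioo ((a + b) / 2 - r) ((a + b) / 2 + r), δ := by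
              refine setIntegral_mono_on (hint.mono_set Set.diff_subset)
                (hIint.mono_set Set.diff_subset)
                (measurableSet_Ioo.diff measurableSet_Ioo) fun t ht => (h t ht.1).2
          _ = δ * ((b - a) - 2 * r) := by
              rw [setIntegral_const, measureReal_def, hvol, smul_eq_mul,
                ENNReal.toReal_ofReal (by linarith)]
              ring
      have h2rδ : 2 * r * δ = D + δ * (b - a) / α := by
        rw [hr]
        field_simp
      nlinarith [hsplit, hbound, hDval]
    -- final assembly
    refine le_trans ?_ (add_le_add_left (add_le_add_left hLo _) _)
    have hXnn : 0 ≤ |γ| * (((b - a) / 2 - r) *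
        ((2 * r)⁻¹ * ∫ t in Set.Ioo ((a + b) / 2 - r) ((a + b) / 2 + r), us t)) := by
      refine mul_nonneg (abs_nonneg γ) (mul_nonneg (by linarith)
        (mul_nonneg (by positivity)
          (le_trans (div_nonneg (mul_nonneg hδ (by linarith)) hα0.le) hSJ)))
    have hT2nn : 0 ≤ α / 2 * (|γ| * D) :=
      mul_nonneg (by positivity) (mul_nonneg (abs_nonneg γ) hD0)
    have hT3nn : 0 ≤ |γ| * δ * (b - a) / (2 * α) :=
      div_nonneg (mul_nonneg (mul_nonneg (abs_nonneg γ) hδ) (by linarith)) (by positivity)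
    rw [← ENNReal.ofReal_add hXnn hT2nn, ← ENNReal.ofReal_add (by linarith) hT3nn]
    apply ENNReal.ofReal_le_ofReal
    have hfac : 0 ≤ |γ| * (((b - a) / 2 - r) * (2 * r)⁻¹) :=
      mul_nonneg (abs_nonneg γ) (mul_nonneg (by linarith) (by positivity))
    have hmono : |γ| * (((b - a) / 2 - r) * ((2 * r)⁻¹ * (δ * (b - a) / α)))
        ≤ |γ| * (((b - a) / 2 - r) *
          ((2 * r)⁻¹ * ∫ t in Set.Ioo ((a + b) / 2 - r) ((a + b) / 2 + r), us t)) := by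
      have e1 : |γ| * (((b - a) / 2 - r) * ((2 * r)⁻¹ * (δ * (b - a) / α)))
          = (|γ| * (((b - a) / 2 - r) * (2 * r)⁻¹)) * (δ * (b - a) / α) := by ring
      have e2 : |γ| * (((b - a) / 2 - r) *
            ((2 * r)⁻¹ * ∫ t in Set.Ioo ((a + b) / 2 - r) ((a + b) / 2 + r), us t))
          = (|γ| * (((b - a) / 2 - r) * (2 * r)⁻¹))
            * ∫ t in Set.Ioo ((a + b) / 2 - r) ((a + b) / 2 + r), us t := by ring
      rw [e1, e2]
      exact mul_le_mul_of_nonneg_left hSJ hfac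
    -- core real inequality
    have hcore : δ * ((b - a) / 2)
        ≤ ((b - a) / 2 - r) * ((2 * r)⁻¹ * (δ * (b - a) / α)) + α / 2 * D
          + δ * (b - a) / (2 * α) := by
      have h2rpos : (0:ℝ) < 2 * r := by linarith
      have h2rδα : 2 * r * δ * α = D * α + δ * (b - a) := by
        rw [hr]
        field_simp
      refine le_of_mul_le_mul_right ?_ (show (0:ℝ) < 2 * r * α * δ by positivity)
      have e : (((b - a) / 2 - r) * ((2 * r)⁻¹ * (δ * (b - a) / α)) + α / 2 * D
            + δ * (b - a) / (2 * α)) * (2 * r * α * δ)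
          = ((b - a) / 2 - r) * (δ * (b - a)) * δ + (α * α / 2 * D) * (2 * r) * δ
            + (δ * (b - a) / 2) * (2 * r) * δ := by
        have c2 : α⁻¹ * α = 1 := inv_mul_cancel₀ (ne_of_gt hα0)
        have c3 : ((2 * r)⁻¹ * (2 * r)) * (α⁻¹ * α) = 1 := by
          rw [inv_mul_cancel₀ (ne_of_gt h2rpos), c2, one_mul]
        linear_combination (((b - a) / 2 - r) * δ ^ 2 * (b - a)) * c3
          + (δ ^ 2 * (b - a) * r) * c2
      rw [e]
      have hdiff : ((b - a) / 2 - r) * (δ * (b - a)) * δ + (α * α / 2 * D) * (2 * r) * δ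
            + (δ * (b - a) / 2) * (2 * r) * δ - δ * ((b - a) / 2) * (2 * r * α * δ)
          = (α * D) ^ 2 / 2 := by
        linear_combination ((α * D - δ * (b - a)) / 2) * h2rδα
      linarith [sq_nonneg (α * D), hdiff]
    calc |γ| * δ * ((b - a) / 2) = |γ| * (δ * ((b - a) / 2)) := by ring
      _ ≤ |γ| * (((b - a) / 2 - r) * ((2 * r)⁻¹ * (δ * (b - a) / α)) + α / 2 * D
          + δ * (b - a) / (2 * α)) := mul_le_mul_of_nonneg_left hcore (abs_nonneg γ)
      _ = |γ| * (((b - a) / 2 - r) * ((2 * r)⁻¹ * (δ * (b - a) / α))) + α / 2 * (|γ| * D)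
          + |γ| * δ * (b - a) / (2 * α) := by ring
      _ ≤ |γ| * (((b - a) / 2 - r) *
            ((2 * r)⁻¹ * ∫ t in Set.Ioo ((a + b) / 2 - r) ((a + b) / 2 + r), us t))
          + α / 2 * (|γ| * D) + |γ| * δ * (b - a) / (2 * α) := by linarith [hmono]
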